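/- Let p ≥ 2 be an integer, let x₁, …, x_p be distinct points in [−1,1] with weights w₁, …, w_p ∈ ℝ such that the quadrature rule Q̂_p(g) = Σ_{k=1}^{p} w_k·g(x_k) is exact of degree 2p − 2. Let f : ℝ → ℝ, let Π_{p−1}f = Σ_{l=0}^{p−1} b_l·L_l be the Legendre expansion of the unique polynomial of degree ≤ p − 1 interpolating f at x₁, …, x_p, and assume Σ_{k=1}^{p} w_k·f(x_k)·L_{p−2}(x_k) ≠ 0. Then (2p − 3)·|b_{p−1}|/|b_{p−2}| = (2p − 1)·|Σ_{k=1}^{p} w_k·f(x_k)·L_{p−1}(x_k)| / |Σ_{k=1}^{p} w_k·f(x_k)·L_{p−2}(x_k)|. -/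
import Mathlib

open Polynomial


/-- The Legendre polynomial `L_n` on `ℝ`, defined via the Rodrigues formula. -/
noncomputable def legendre (n : ℕ) : ℝ → ℝ :=
  fun x => (1 / ((2 : ℝ) ^ n * (n.factorial : ℝ))) *
    iteratedDeriv n (fun y => (y ^ 2 - 1) ^ n) x

noncomputable def Wp (n : ℕ) : Polynomial ℝ := (X^2 - 1)^n

noncomputable def Lp (n : ℕ) : Polynomial ℝ :=
  C (1/((2:ℝ)^n * (n.factorial : ℝ))) * derivative^[n] (Wp n)

lemma iteratedDeriv_eval (q : Polynomial ℝ) (k : ℕ) :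
    iteratedDeriv k (fun y => q.eval y) = fun x => (derivative^[k] q).eval x := by
  induction k generalizing q with
  | zero => simp
  | succ k ih =>
    rw [iteratedDeriv_succ', Function.iterate_succ_apply]
    rw [show deriv (fun y => q.eval y) = fun y => q.derivative.eval y from
      funext fun y => Polynomial.deriv q]
    exact ih _

lemma legendre_eq (n : ℕ) (t : ℝ) : legendre n t = (Lp n).eval t := by
  have : (fun y : ℝ => (y^2-1)^n) = fun y => (Wp n).eval y := by
    funext y; simp [Wp]
  rw [legendre, Lp, this, iteratedDeriv_eval]
  simp

noncomputable def Ii (q : Polynomial ℝ) : ℝ := ∫ t in (-1:ℝ)..1, q.eval t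

lemma Ii_intble (q : Polynomial ℝ) :
    IntervalIntegrable (fun t => q.eval t) MeasureTheory.volume (-1:ℝ) 1 :=
  (q.continuous_aeval).intervalIntegrable _ _

lemma Ii_add (q r : Polynomial ℝ) : Ii (q + r) = Ii q + Ii r := by
  unfold Ii
  simp only [eval_add]
  exact intervalIntegral.integral_add (Ii_intble q) (Ii_intble r)

lemma Ii_smul (a : ℝ) (q : Polynomial ℝ) : Ii (C a * q) = a * Ii q := by
  unfold Ii
  simp only [eval_mul, eval_C]
  exact intervalIntegral.integral_const_mul a _

lemma Ii_sub (q r : Polynomial ℝ) : Ii (q - r) = Ii q - Ii r := by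
  unfold Ii
  simp only [eval_sub]
  exact intervalIntegral.integral_sub (Ii_intble q) (Ii_intble r)

lemma Ii_zero : Ii 0 = 0 := by unfold Ii; simp

lemma Ii_sum {ι : Type*} (s : Finset ι) (g : ι → Polynomial ℝ) :
    Ii (∑ i ∈ s, g i) = ∑ i ∈ s, Ii (g i) := by
  classical
  induction s using Finset.cons_induction with
  | empty => simp [Ii_zero]
  | cons i s hi ih => simp [Finset.sum_insert hi, Ii_add, ih]

lemma Ii_deriv (q : Polynomial ℝ) : Ii (derivative q) = q.eval 1 - q.eval (-1) := by
  unfold Ii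
  exact intervalIntegral.integral_deriv_eq_sub' (fun y => q.eval y)
    (funext fun y => Polynomial.deriv q)
    (fun t _ => q.differentiable_aeval t) ((derivative q).continuous_aeval.continuousOn)

lemma Ii_parts (u v : Polynomial ℝ) :
    Ii (u * derivative v) = (u*v).eval 1 - (u*v).eval (-1) - Ii (derivative u * v) := by
  have h := Ii_deriv (u * v)
  rw [derivative_mul, Ii_add] at h
  linarith

lemma iter_deriv_factor (a : ℝ) (n : ℕ) (g : Polynomial ℝ) :
    ∀ k, k ≤ n → ∃ h : Polynomial ℝ,
      derivative^[k] ((X - C a)^n * g) = (X - C a)^(n-k) * h := by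
  intro k
  induction k with
  | zero => intro _; exact ⟨g, by simp⟩
  | succ k ih =>
    intro hk
    obtain ⟨h, hh⟩ := ih (Nat.le_of_succ_le hk)
    refine ⟨C ((n:ℝ) - k) * h + (X - C a) * derivative h, ?_⟩
    rw [Function.iterate_succ_apply', hh, derivative_mul, derivative_pow]
    have h1 : n - k = (n - (k+1)) + 1 := by omega
    rw [h1]
    have h3 : derivative (X - C a) = 1 := by simp
    rw [h3]
    have h5 : ((n - (k+1) + 1 : ℕ) : ℝ) = (n:ℝ) - k := by
      have : (n - (k+1) + 1 : ℕ) = n - k := by omega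
      rw [this, Nat.cast_sub (by omega)]
    rw [h5]
    simp only [Nat.add_sub_cancel, mul_one]
    ring

lemma Wp_eval_vanish (n k : ℕ) (hk : k < n) :
    (derivative^[k] ((X^2 - 1 : Polynomial ℝ)^n)).eval 1 = 0 ∧
    (derivative^[k] ((X^2 - 1 : Polynomial ℝ)^n)).eval (-1) = 0 := by
  have hfac : ((X:Polynomial ℝ)^2 - 1) = (X - C 1) * (X - C (-1)) := by
    simp; ring
  constructor
  · obtain ⟨h, hh⟩ := iter_deriv_factor 1 n ((X - C (-1))^n) k hk.le
    rw [show ((X:Polynomial ℝ)^2-1)^n = (X - C 1)^n * (X - C (-1))^n by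
      rw [hfac, mul_pow], hh]
    have : n - k ≠ 0 := by omega
    simp [zero_pow this]
  · obtain ⟨h, hh⟩ := iter_deriv_factor (-1) n ((X - C 1)^n) k hk.le
    rw [show ((X:Polynomial ℝ)^2-1)^n = (X - C (-1))^n * (X - C 1)^n by
      rw [hfac, mul_pow]; ring, hh]
    have : n - k ≠ 0 := by omega
    simp [zero_pow this]

lemma parts_iter (n : ℕ) (q : Polynomial ℝ) :
    ∀ j, j ≤ n → Ii (q * derivative^[n] (Wp n)) =
      (-1:ℝ)^j * Ii (derivative^[j] q * derivative^[n-j] (Wp n)) := by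
  intro j
  induction j with
  | zero => intro _; simp
  | succ j ih =>
    intro hj
    rw [ih (Nat.le_of_succ_le hj)]
    have h1 : n - j = (n - (j+1)) + 1 := by omega
    rw [h1, show derivative^[n - (j+1) + 1] (Wp n)
        = derivative (derivative^[n - (j+1)] (Wp n)) from Function.iterate_succ_apply' _ _ _]
    rw [Ii_parts]
    have hv := Wp_eval_vanish n (n - (j+1)) (by omega)
    rw [show derivative^[j+1] q = derivative (derivative^[j] q) from
      Function.iterate_succ_apply' _ _ _]
    simp only [eval_mul, Wp]
    rw [hv.1, hv.2]
    ring

lemma ortho_low (n : ℕ) (q : Polynomial ℝ) (hq : q.natDegree < n) :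
    Ii (q * derivative^[n] (Wp n)) = 0 := by
  rw [parts_iter n q n le_rfl, iterate_derivative_eq_zero hq]
  simp [Ii_zero]

lemma Wp_monic (n : ℕ) : (Wp n).Monic := by
  have : ((X:Polynomial ℝ)^2 - 1).Monic := by
    simpa using monic_X_pow_sub_C (1:ℝ) two_ne_zero
  exact this.pow n

lemma Wp_natDegree (n : ℕ) : (Wp n).natDegree = 2*n := by
  have h : ((X:Polynomial ℝ)^2 - 1).Monic := by
    simpa using monic_X_pow_sub_C (1:ℝ) two_ne_zero
  rw [Wp, h.natDegree_pow]
  have : ((X:Polynomial ℝ)^2 - 1).natDegree = 2 := by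
    compute_degree!
  rw [this]; ring

lemma iter2n (n : ℕ) : derivative^[2*n] (Wp n) = C (((2*n).factorial : ℝ)) := by
  have hdeg : (derivative^[2*n] (Wp n)).natDegree ≤ 0 := by
    have := natDegree_iterate_derivative (Wp n) (2*n)
    rw [Wp_natDegree] at this; omega
  rw [eq_C_of_natDegree_le_zero hdeg]
  congr 1
  rw [Polynomial.coeff_iterate_derivative]
  simp only [zero_add, Nat.descFactorial_self]
  rw [show (Wp n).coeff (2*n) = 1 from by
    rw [← Wp_natDegree n]; exact (Wp_monic n).coeff_natDegree]
  simp

noncomputable def Jv (n : ℕ) : ℝ := Ii ((1 - X^2)^n)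

lemma Jv_zero : Jv 0 = 2 := by
  unfold Jv Ii
  norm_num

lemma Jv_rec (n : ℕ) : (2*(n:ℝ)+3) * Jv (n+1) = (2*(n:ℝ)+2) * Jv n := by
  have key : derivative ((X : Polynomial ℝ) * (1 - X^2)^(n+1)) =
      C (2*(n:ℝ)+3) * (1-X^2)^(n+1) - C (2*(n:ℝ)+2) * (1-X^2)^n := by
    rw [derivative_mul, derivative_pow, derivative_X]
    simp only [derivative_sub, derivative_one, derivative_X_pow, Nat.add_sub_cancel]
    push_cast
    simp only [map_add, map_mul, map_ofNat, C_1, C_eq_natCast]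
    ring
  have h0 : Ii (derivative ((X : Polynomial ℝ) * (1 - X^2)^(n+1))) = 0 := by
    rw [Ii_deriv]
    simp
  rw [key, Ii_sub, Ii_smul, Ii_smul] at h0
  unfold Jv
  linarith

lemma Jv_closed (n : ℕ) :
    Jv n = 2^(2*n+1) * ((n.factorial : ℝ))^2 / (((2*n+1).factorial : ℝ)) := by
  induction n with
  | zero => rw [Jv_zero]; norm_num
  | succ n ih =>
    have hrec := Jv_rec n
    have h3 : (2*(n:ℝ)+3) ≠ 0 := by positivity
    have hJ : Jv (n+1) = (2*(n:ℝ)+2) * Jv n / (2*(n:ℝ)+3) := by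
      field_simp at hrec ⊢
      linarith
    rw [hJ, ih]
    have hfac : ((2*(n+1)+1).factorial : ℝ)
        = (2*(n:ℝ)+3) * (2*(n:ℝ)+2) * ((2*n+1).factorial : ℝ) := by
      have : 2*(n+1)+1 = (2*n+1) + 1 + 1 := by omega
      rw [this, Nat.factorial_succ, Nat.factorial_succ]
      push_cast
      ring
    have hfn : (((n+1).factorial : ℝ)) = ((n:ℝ)+1) * (n.factorial : ℝ) := by
      rw [Nat.factorial_succ]; push_cast; ring
    rw [hfac, hfn]
    have hne : ((2*n+1).factorial : ℝ) ≠ 0 := by positivity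
    field_simp
    ring

lemma Lp_natDegree (n : ℕ) : (Lp n).natDegree ≤ n := by
  refine le_trans (natDegree_mul_le) ?_
  have h1 := natDegree_iterate_derivative (Wp n) n
  rw [Wp_natDegree] at h1
  simp only [natDegree_C, zero_add]
  omega

lemma Ii_Wp (n : ℕ) : Ii (Wp n) = (-1:ℝ)^n * Jv n := by
  have : Wp n = C ((-1:ℝ)^n) * (1 - X^2)^n := by
    rw [Wp, show ((X:Polynomial ℝ)^2 - 1) = (-1) * (1 - X^2) by ring, mul_pow]
    simp [C_eq_natCast]
  rw [this, Ii_smul, Jv]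

lemma Lp_norm (n : ℕ) : Ii (Lp n * Lp n) = 2 / (2*(n:ℝ)+1) := by
  have hDD : Ii (derivative^[n] (Wp n) * derivative^[n] (Wp n))
      = ((2*n).factorial : ℝ) * Jv n := by
    rw [parts_iter n _ n le_rfl]
    rw [show derivative^[n] (derivative^[n] (Wp n)) = derivative^[2*n] (Wp n) by
      rw [show 2*n = n + n by ring, Function.iterate_add_apply]]
    rw [iter2n, Nat.sub_self, Function.iterate_zero_apply, Ii_smul, Ii_Wp]
    have hm1 : (-1:ℝ)^n * ((-1:ℝ)^n) = 1 := by
      rw [← pow_add, ← two_mul, pow_mul]; norm_num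
    linear_combination (((2*n).factorial : ℝ) * Jv n) * hm1
  have hsq : Lp n * Lp n = C ((1/((2:ℝ)^n * (n.factorial : ℝ)))^2)
      * (derivative^[n] (Wp n) * derivative^[n] (Wp n)) := by
    rw [Lp]; rw [map_pow]
    ring
  rw [hsq, Ii_smul, hDD, Jv_closed]
  have h1 : ((2*n+1).factorial : ℝ) = (2*(n:ℝ)+1) * ((2*n).factorial : ℝ) := by
    rw [Nat.factorial_succ]; push_cast; ring
  have h2 : (n.factorial : ℝ) ≠ 0 := by positivity
  have h3 : ((2*n).factorial : ℝ) ≠ 0 := by positivity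
  have h4 : (2*(n:ℝ)+1) ≠ 0 := by positivity
  have h5 : ((2:ℝ)^n) ≠ 0 := by positivity
  rw [h1]
  field_simp
  ring

lemma Lp_ortho {m n : ℕ} (h : m ≠ n) : Ii (Lp m * Lp n) = 0 := by
  rcases Nat.lt_or_ge m n with hmn | hge
  · have : Lp m * Lp n = C (1/((2:ℝ)^n * (n.factorial : ℝ)))
        * (Lp m * derivative^[n] (Wp n)) := by
      simp only [Lp]; ring
    rw [this, Ii_smul, ortho_low n (Lp m) (lt_of_le_of_lt (Lp_natDegree m) hmn), mul_zero]
  · have hnm : n < m := by omega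
    have : Lp m * Lp n = C (1/((2:ℝ)^m * (m.factorial : ℝ)))
        * (Lp n * derivative^[m] (Wp m)) := by
      simp only [Lp]; ring
    rw [this, Ii_smul, ortho_low m (Lp n) (lt_of_le_of_lt (Lp_natDegree n) hnm), mul_zero]

/-- Under the hypotheses of Statement 10, and assuming
`Σ_k w_k f(x_k) L_{p-2}(x_k) ≠ 0`, one has
`(2p - 3)|b_{p-1}|/|b_{p-2}| = (2p - 1)|Σ_k w_k f(x_k) L_{p-1}(x_k)| / |Σ_k w_k f(x_k) L_{p-2}(x_k)|`. -/
theorem statement11 (p : ℕ) (hp : 2 ≤ p) (x w : Fin p → ℝ)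
    (hxmem : ∀ k, x k ∈ Set.Icc (-1 : ℝ) 1) (hxinj : Function.Injective x)
    (hexact : ∀ q : Polynomial ℝ, q.natDegree ≤ 2 * p - 2 →
      ∑ k, w k * q.eval (x k) = ∫ t in (-1 : ℝ)..1, q.eval t)
    (f : ℝ → ℝ) (P : Polynomial ℝ) (hPdeg : P.natDegree ≤ p - 1)
    (hPinterp : ∀ k, P.eval (x k) = f (x k))
    (b : ℕ → ℝ) (hb : ∀ y : ℝ, P.eval y = ∑ l ∈ Finset.range p, b l * legendre l y)
    (hden : ∑ k, w k * f (x k) * legendre (p - 2) (x k) ≠ 0) :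
    (2 * (p : ℝ) - 3) * |b (p - 1)| / |b (p - 2)| =
      (2 * (p : ℝ) - 1) * |∑ k, w k * f (x k) * legendre (p - 1) (x k)| /
        |∑ k, w k * f (x k) * legendre (p - 2) (x k)| := by
  have hPeq : P = ∑ l ∈ Finset.range p, C (b l) * Lp l := by
    apply Polynomial.funext
    intro y
    rw [hb y, eval_finset_sum]
    refine Finset.sum_congr rfl fun l _ => ?_
    rw [eval_mul, eval_C, legendre_eq]
  have hS : ∀ j, j < p → (∑ k, w k * f (x k) * legendre j (x k))
      = b j * (2/(2*(j:ℝ)+1)) := by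
    intro j hj
    have h1 : ∀ k, w k * f (x k) * legendre j (x k) = w k * (P * Lp j).eval (x k) := by
      intro k
      rw [← hPinterp k, legendre_eq, eval_mul]
      ring
    rw [Finset.sum_congr rfl fun k _ => h1 k]
    have hdegL := Lp_natDegree j
    have hdeg : (P * Lp j).natDegree ≤ 2*p - 2 := by
      refine le_trans natDegree_mul_le ?_
      omega
    rw [hexact _ hdeg]
    have hIi : (∫ t in (-1:ℝ)..1, (P * Lp j).eval t) = Ii (P * Lp j) := rfl
    rw [hIi]
    conv_lhs => rw [hPeq]
    rw [Finset.sum_mul, Ii_sum]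
    rw [Finset.sum_eq_single j]
    · rw [mul_assoc, Ii_smul, Lp_norm]
    · intro l hl hlj
      rw [mul_assoc, Ii_smul, Lp_ortho hlj, mul_zero]
    · intro hj'; exact absurd (Finset.mem_range.mpr hj) hj'
  have hS1 := hS (p-1) (by omega)
  have hS2 := hS (p-2) (by omega)
  have hc1 : ((p-1:ℕ):ℝ) = (p:ℝ) - 1 := by
    rw [Nat.cast_sub (by omega)]; simp
  have hc2 : ((p-2:ℕ):ℝ) = (p:ℝ) - 2 := by
    rw [Nat.cast_sub (by omega)]; norm_num
  rw [hc1] at hS1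
  rw [hc2] at hS2
  have hp2 : (2:ℝ) ≤ (p:ℝ) := by exact_mod_cast hp
  rw [hS2] at hden
  have hb2 : b (p-2) ≠ 0 := by
    intro h
    exact hden (by rw [h]; ring)
  rw [hS1, hS2]
  have hpos1 : (0:ℝ) < 2*((p:ℝ)-1)+1 := by linarith
  have hpos2 : (0:ℝ) < 2*((p:ℝ)-2)+1 := by linarith
  rw [abs_mul, abs_mul,
    abs_of_pos (show (0:ℝ) < 2/(2*((p:ℝ)-1)+1) by positivity),
    abs_of_pos (show (0:ℝ) < 2/(2*((p:ℝ)-2)+1) by positivity)]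
  have hB : |b (p-2)| ≠ 0 := abs_ne_zero.mpr hb2
  have hn1 : 2*((p:ℝ)-1)+1 ≠ 0 := ne_of_gt hpos1
  have hn2 : 2*((p:ℝ)-2)+1 ≠ 0 := ne_of_gt hpos2
  field_simp
  ring
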